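/- Let w be a vector in R^d and let w_m denote the vector obtained from w by keeping its m largest coordinates in absolute value and setting the rest to zero. Then the l2 norm of w - w_m is at most ||w||_1 / (2*sqrt(m)). -/
import Mathlib


open scoped BigOperators

noncomputable def l2 {d : ℕ} (v : Fin d → ℝ) : ℝ := Real.sqrt (∑ i, (v i)^2)

noncomputable def l1 {d : ℕ} (v : Fin d → ℝ) : ℝ := ∑ i, |v i|

noncomputable def linf {d : ℕ} (v : Fin d → ℝ) : ℝ := ⨆ i, |v i|

noncomputable def restrict {d : ℕ} (v : Fin d → ℝ) (T : Finset (Fin d)) : Fin d → ℝ :=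
  fun i => if i ∈ T then v i else 0

open Classical in
noncomputable def spt {d : ℕ} (v : Fin d → ℝ) : Finset (Fin d) :=
  Finset.univ.filter (fun i => v i ≠ 0)

def RIC {N d : ℕ} (Φ : Matrix (Fin N) (Fin d) ℝ) (m : ℕ) (ε : ℝ) : Prop :=
  ∀ z : Fin d → ℝ, (spt z).card ≤ m →
    (1 - ε) * l2 z ≤ l2 (Φ.mulVec z) ∧ l2 (Φ.mulVec z) ≤ (1 + ε) * l2 z

/-- Lemma 3.5 (Comparing the norms): if $S$ is a set of $m$ coordinates of $w$ of
largest absolute value, then $\|w - w_m\|_2 \le \|w\|_1 / (2\sqrt m)$. -/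
theorem stmt0 {d : ℕ} (w : Fin d → ℝ) (m : ℕ) (hm : 0 < m)
    (S : Finset (Fin d)) (hcard : S.card = m)
    (hbig : ∀ i ∈ S, ∀ j ∉ S, |w j| ≤ |w i|) :
    l2 (w - restrict w S) ≤ l1 w / (2 * Real.sqrt m) := by
  classical
  have hm' : (0:ℝ) < m := by exact_mod_cast hm
  set a := ∑ i ∈ S, |w i| with ha
  set b := ∑ i ∈ Sᶜ, |w i| with hb
  have ha0 : 0 ≤ a := Finset.sum_nonneg fun i _ => abs_nonneg _
  have hb0 : 0 ≤ b := Finset.sum_nonneg fun i _ => abs_nonneg _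
  have hab : l1 w = a + b := by
    rw [l1, ← Finset.sum_add_sum_compl S]
  have hkey : ∀ j ∈ Sᶜ, |w j| ≤ a / m := by
    intro j hj
    rw [le_div_iff₀ hm']
    calc |w j| * m = ∑ _i ∈ S, |w j| := by
          rw [Finset.sum_const, hcard, nsmul_eq_mul, mul_comm]
      _ ≤ a := Finset.sum_le_sum fun i hi => hbig i hi j (Finset.mem_compl.mp hj)
  have hsq : ∑ j ∈ Sᶜ, (w j)^2 ≤ a * b / m := by
    calc ∑ j ∈ Sᶜ, (w j)^2 ≤ ∑ j ∈ Sᶜ, (a/m) * |w j| := by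
          apply Finset.sum_le_sum
          intro j hj
          have h1 := hkey j hj
          have h2 : (w j)^2 = |w j| * |w j| := by rw [sq, ← abs_mul_abs_self]
          rw [h2]
          exact mul_le_mul_of_nonneg_right h1 (abs_nonneg _)
      _ = a/m * b := by rw [← Finset.mul_sum]
      _ = a*b/m := by ring
  have hamgm : a*b/m ≤ (a+b)^2/(4*m) := by
    rw [div_le_div_iff₀ hm' (by positivity)]
    nlinarith [sq_nonneg (a-b)]
  have hl2 : l2 (w - restrict w S) = Real.sqrt (∑ j ∈ Sᶜ, (w j)^2) := by
    unfold l2 restrict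
    congr 1
    rw [← Finset.sum_add_sum_compl S]
    have h1 : ∑ j ∈ S, ((w - fun i => if i ∈ S then w i else 0) j)^2 = 0 := by
      apply Finset.sum_eq_zero
      intro j hj
      simp [hj]
    have h2 : ∑ j ∈ Sᶜ, ((w - fun i => if i ∈ S then w i else 0) j)^2
        = ∑ j ∈ Sᶜ, (w j)^2 := by
      apply Finset.sum_congr rfl
      intro j hj
      simp [Finset.mem_compl.mp hj]
    rw [h1, h2, zero_add]
  rw [hl2, hab]
  have hstep : Real.sqrt (∑ j ∈ Sᶜ, (w j)^2) ≤ Real.sqrt ((a+b)^2/(4*m)) :=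
    Real.sqrt_le_sqrt (hsq.trans hamgm)
  refine hstep.trans (le_of_eq ?_)
  have heq : (a+b)^2/(4*(m:ℝ)) = ((a+b)/(2*Real.sqrt m))^2 := by
    rw [div_pow, mul_pow, Real.sq_sqrt hm'.le]; norm_num
  rw [heq, Real.sqrt_sq (div_nonneg (by linarith) (by positivity))]
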